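/- Let G be a {C₃,C₄}-free graph of maximum degree at most 3, with vertex weights a*, d*: V(G) → {0,1}, such that: every vertex of degree at least 2 has d*-value 1; no vertex of degree 3 is adjacent to a vertex with a*-value 0; and the degree-3 vertices form an independent set. Let X₃ be the set of degree-3 vertices, X₂' the set of degree-2 vertices with a neighbour in X₃, X₂'' the remaining degree-2 vertices, Z the set of vertices of X₂'' having a neighbour w with a*(w)=0, and Y = Z ∪ X₂' ∪ X₃. Then (G, a*, d*) is a YES-instance of (1,1)-Cluster Editing if and only if G has a matching covering every vertex of Y and covering no vertex w with d*(w)=0. -/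

import Mathlib

open SimpleGraph

variable {V : Type*}

/-- A graph whose edge set is a matching: every vertex has at most one neighbour. -/
def IsMatchingGraph (M : SimpleGraph V) : Prop :=
  ∀ ⦃v w w' : V⦄, M.Adj v w → M.Adj v w' → w = w'

/-- A cluster graph: every connected component is a complete graph. -/
def IsClusterGraph (G : SimpleGraph V) : Prop :=
  ∀ ⦃u v w : V⦄, G.Adj u v → G.Adj v w → u ≠ w → G.Adj u w

/-- No `C₃` (triangle) subgraph. -/
def TriangleFree (G : SimpleGraph V) : Prop :=
  ∀ ⦃u v w : V⦄, G.Adj u v → G.Adj v w → G.Adj u w → False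

/-- No `C₄` subgraph. -/
def C4Free (G : SimpleGraph V) : Prop :=
  ∀ ⦃p q r s : V⦄, p ≠ r → q ≠ s →
    G.Adj p q → G.Adj q r → G.Adj r s → G.Adj s p → False

/-- Degree of a vertex (as the cardinality of its neighbourhood). -/
noncomputable def ndeg (G : SimpleGraph V) (v : V) : ℕ := {w | G.Adj v w}.ncard

/-- Maximum degree at most `n`. -/
def MaxDegLE (G : SimpleGraph V) (n : ℕ) : Prop := ∀ v, ndeg G v ≤ n

/-- `D` is a matching of deletable edges of `G` (w.r.t. weights `d`). -/
def DelMatching (G D : SimpleGraph V) (d : V → ℕ) : Prop :=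
  D ≤ G ∧ IsMatchingGraph D ∧ ∀ ⦃u v : V⦄, D.Adj u v → d u = 1 ∧ d v = 1

/-- `A` is a matching of addable edges of the complement of `G` (w.r.t. weights `a`). -/
def AddMatching (G A : SimpleGraph V) (a : V → ℕ) : Prop :=
  A ≤ Gᶜ ∧ IsMatchingGraph A ∧ ∀ ⦃u v : V⦄, A.Adj u v → a u = 1 ∧ a v = 1

/-- `(G, a, d)` is a YES-instance of `(1,1)`-Cluster Editing (matching formulation). -/
def HasSolution (G : SimpleGraph V) (a d : V → ℕ) : Prop :=
  ∃ D A : SimpleGraph V, DelMatching G D d ∧ AddMatching G A a ∧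
    IsClusterGraph ((G \ D) ⊔ A)

/-- The component `c` of `H` is a `P₁` (single vertex). -/
def P1Comp (H : SimpleGraph V) (c : H.ConnectedComponent) : Prop :=
  ∃ v : V, c.supp = {v}

/-- The component `c` of `H` is a `P₂` (a single edge). -/
def P2Comp (H : SimpleGraph V) (c : H.ConnectedComponent) : Prop :=
  ∃ u v : V, H.Adj u v ∧ c.supp = {u, v}

/-- The component `c` of `H` is a path `u - m - w` on three vertices. -/
def P3Comp (H : SimpleGraph V) (c : H.ConnectedComponent) (u m w : V) : Prop :=
  H.Adj u m ∧ H.Adj m w ∧ u ≠ w ∧ ¬ H.Adj u w ∧ c.supp = {u, m, w}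

/-- The component `c` of `H` is a chordless cycle `p - q - r - s - p` on four vertices. -/
def C4Comp (H : SimpleGraph V) (c : H.ConnectedComponent) (p q r s : V) : Prop :=
  H.Adj p q ∧ H.Adj q r ∧ H.Adj r s ∧ H.Adj s p ∧ p ≠ r ∧ q ≠ s ∧
    ¬ H.Adj p r ∧ ¬ H.Adj q s ∧ c.supp = {p, q, r, s}

/-- Every connected component of `H` is isomorphic to `P₁`, `P₂`, `P₃` or `C₄`. -/
def GoodComponents (H : SimpleGraph V) : Prop :=
  ∀ c : H.ConnectedComponent,
    P1Comp H c ∨ P2Comp H c ∨ (∃ u m w, P3Comp H c u m w) ∨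
      (∃ p q r s, C4Comp H c p q r s)

/-- `G` contains `K_{2,3}` as a subgraph. -/
def ContainsK23 (G : SimpleGraph V) : Prop :=
  ∃ x₁ x₂ y₁ y₂ y₃ : V, x₁ ≠ x₂ ∧ y₁ ≠ y₂ ∧ y₁ ≠ y₃ ∧ y₂ ≠ y₃ ∧
    G.Adj x₁ y₁ ∧ G.Adj x₁ y₂ ∧ G.Adj x₁ y₃ ∧ G.Adj x₂ y₁ ∧ G.Adj x₂ y₂ ∧ G.Adj x₂ y₃

/-- Degree-3 vertices. -/
noncomputable def X3 (G : SimpleGraph V) : Set V := {v | ndeg G v = 3}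

/-- Degree-2 vertices with a degree-3 neighbour. -/
noncomputable def X2p (G : SimpleGraph V) : Set V :=
  {v | ndeg G v = 2 ∧ ∃ w, G.Adj v w ∧ ndeg G w = 3}

/-- Degree-2 vertices with no degree-3 neighbour. -/
noncomputable def X2pp (G : SimpleGraph V) : Set V :=
  {v | ndeg G v = 2 ∧ ∀ w, G.Adj v w → ndeg G w ≠ 3}

/-- Vertices of `X2''` with a neighbour of `a`-value 0. -/
noncomputable def Zset (G : SimpleGraph V) (a : V → ℕ) : Set V :=
  {v | v ∈ X2pp G ∧ ∃ w, G.Adj v w ∧ a w = 0}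

/-- `Y = Z ∪ X₂' ∪ X₃`. -/
noncomputable def Yset (G : SimpleGraph V) (a : V → ℕ) : Set V :=
  Zset G a ∪ X2p G ∪ X3 G

section Helpers

variable {V : Type*}

lemma ndeg_nbrs (G : SimpleGraph V) (v : V) : {w | G.Adj v w} = G.neighborSet v := rfl

lemma two_le_ndeg [Finite V] {G : SimpleGraph V} {v a b : V}
    (hab : a ≠ b) (h1 : G.Adj v a) (h2 : G.Adj v b) : 2 ≤ ndeg G v := by
  have hsub : ({a, b} : Set V) ⊆ {w | G.Adj v w} := by
    intro z hz; rcases hz with rfl | hz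
    · exact h1
    · simp only [Set.mem_singleton_iff] at hz; subst hz; exact h2
  have := Set.ncard_le_ncard hsub (Set.toFinite _)
  rwa [Set.ncard_pair hab] at this

lemma three_le_ndeg [Finite V] {G : SimpleGraph V} {v a b c : V}
    (hab : a ≠ b) (hac : a ≠ c) (hbc : b ≠ c)
    (h1 : G.Adj v a) (h2 : G.Adj v b) (h3 : G.Adj v c) : 3 ≤ ndeg G v := by
  have hsub : ({a, b, c} : Set V) ⊆ {w | G.Adj v w} := by
    intro z hz; rcases hz with rfl | rfl | hz
    · exact h1
    · exact h2
    · simp only [Set.mem_singleton_iff] at hz; subst hz; exact h3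
  have hc : ({a, b, c} : Set V).ncard = 3 := by
    rw [Set.ncard_insert_of_notMem (by simp [hab, hac]) (Set.toFinite _),
        Set.ncard_pair hbc]
  have := Set.ncard_le_ncard hsub (Set.toFinite _)
  rwa [hc] at this

lemma nbrs_of_ndeg_two {G : SimpleGraph V} {v : V} (h : ndeg G v = 2) :
    ∃ a b, a ≠ b ∧ G.Adj v a ∧ G.Adj v b ∧ ∀ z, G.Adj v z → z = a ∨ z = b := by
  obtain ⟨a, b, hab, hset⟩ := Set.ncard_eq_two.mp h
  refine ⟨a, b, hab, ?_, ?_, ?_⟩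
  · show a ∈ {w | G.Adj v w}; rw [hset]; simp
  · show b ∈ {w | G.Adj v w}; rw [hset]; simp
  · intro z hz
    have : z ∈ ({a, b} : Set V) := hset ▸ hz
    simpa using this

lemma nbrs_of_ndeg_three {G : SimpleGraph V} {v : V} (h : ndeg G v = 3) :
    ∃ a b c, a ≠ b ∧ a ≠ c ∧ b ≠ c ∧ G.Adj v a ∧ G.Adj v b ∧ G.Adj v c ∧
      ∀ z, G.Adj v z → z = a ∨ z = b ∨ z = c := by
  obtain ⟨a, b, c, hab, hac, hbc, hset⟩ := Set.ncard_eq_three.mp h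
  refine ⟨a, b, c, hab, hac, hbc, ?_, ?_, ?_, ?_⟩
  · show a ∈ {w | G.Adj v w}; rw [hset]; simp
  · show b ∈ {w | G.Adj v w}; rw [hset]; simp
  · show c ∈ {w | G.Adj v w}; rw [hset]; simp
  · intro z hz
    have : z ∈ ({a, b, c} : Set V) := hset ▸ hz
    simpa using this

/-- If `ndeg v = 2` and `p ≠ q` are neighbours, any neighbour is `p` or `q`. -/
lemma mem_two [Finite V] {G : SimpleGraph V} {v p q : V} (h : ndeg G v = 2)
    (hp : G.Adj v p) (hq : G.Adj v q) (hpq : p ≠ q) :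
    ∀ z, G.Adj v z → z = p ∨ z = q := by
  obtain ⟨a, b, hab, ha, hb, hall⟩ := nbrs_of_ndeg_two h
  intro z hz
  rcases hall p hp with rfl | rfl <;> rcases hall q hq with rfl | rfl <;>
    rcases hall z hz with rfl | rfl <;> tauto

end Helpers
section Plan

variable {V : Type*}

lemma plan_to_sol [DecidableEq V] (G : SimpleGraph V) (a d : V → ℕ)
    (part : V → Finset V)
    (hmem : ∀ v, v ∈ part v)
    (heq : ∀ u v, u ∈ part v → part u = part v)
    (hshape : ∀ v, (part v = {v}) ∨ (∃ p q, p ≠ q ∧ G.Adj p q ∧ part v = {p, q}) ∨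
      (∃ x m y, G.Adj x m ∧ G.Adj m y ∧ x ≠ y ∧ ¬ G.Adj x y ∧ a x = 1 ∧ a y = 1 ∧
        part v = {x, m, y}))
    (hcrossd : ∀ u v, G.Adj u v → v ∉ part u → d u = 1)
    (hcrossm : ∀ u v w, G.Adj u v → G.Adj u w → v ∉ part u → w ∉ part u → v = w) :
    HasSolution G a d := by
  have hsym : ∀ u v : V, v ∈ part u ↔ u ∈ part v := by
    intro u v
    constructor
    · intro h; rw [heq v u h]; exact hmem u
    · intro h; rw [heq u v h]; exact hmem v
  set D : SimpleGraph V :=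
    { Adj := fun u v => G.Adj u v ∧ v ∉ part u
      symm := by
        constructor
        intro u v h
        exact ⟨h.1.symm, fun hc => h.2 ((hsym v u).mp hc)⟩
      loopless := ⟨fun u h => G.loopless.irrefl u h.1⟩ } with hD
  set A : SimpleGraph V :=
    { Adj := fun u v => u ≠ v ∧ v ∈ part u ∧ ¬ G.Adj u v
      symm := by
        constructor
        intro u v h
        exact ⟨h.1.symm, (hsym u v).mp h.2.1, fun hc => h.2.2 hc.symm⟩
      loopless := ⟨fun u h => h.1 rfl⟩ } with hA
  have hDadj : ∀ u v, D.Adj u v ↔ (G.Adj u v ∧ v ∉ part u) := fun _ _ => Iff.rfl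
  have hAadj : ∀ u v, A.Adj u v ↔ (u ≠ v ∧ v ∈ part u ∧ ¬ G.Adj u v) := fun _ _ => Iff.rfl
  -- a-value of A endpoints
  have hAa : ∀ u v, A.Adj u v → a u = 1 := by
    intro u v h
    obtain ⟨hne, hmemv, hnadj⟩ := h
    rcases hshape u with h1 | ⟨p, q, hpq, hadj, hpart⟩ | ⟨x, m, y, hxm, hmy, hxy, hnxy, hax, hay, hpart⟩
    · rw [h1] at hmemv; simp at hmemv; exact absurd hmemv.symm hne
    · -- part u = {p,q}, u,v within, u≠v, nonadjacent: contradiction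
      exfalso
      have hu : u ∈ ({p, q} : Finset V) := hpart ▸ hmem u
      have hv : v ∈ ({p, q} : Finset V) := hpart ▸ hmemv
      simp only [Finset.mem_insert, Finset.mem_singleton] at hu hv
      rcases hu with rfl | rfl <;> rcases hv with rfl | rfl <;> first
        | exact hne rfl
        | exact hnadj hadj
        | exact hnadj hadj.symm
    · have hu : u ∈ ({x, m, y} : Finset V) := hpart ▸ hmem u
      have hv : v ∈ ({x, m, y} : Finset V) := hpart ▸ hmemv
      simp only [Finset.mem_insert, Finset.mem_singleton] at hu hv
      rcases hu with rfl | rfl | rfl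
      · exact hax
      · exfalso
        rcases hv with rfl | rfl | rfl
        · exact hnadj hxm.symm
        · exact hne rfl
        · exact hnadj hmy
      · exact hay
  -- A is a matching
  have hAm : ∀ u v w, A.Adj u v → A.Adj u w → v = w := by
    intro u v w h1 h2
    obtain ⟨hne1, hm1, hna1⟩ := h1
    obtain ⟨hne2, hm2, hna2⟩ := h2
    rcases hshape u with h1' | ⟨p, q, hpq, hadj, hpart⟩ | ⟨x, m, y, hxm, hmy, hxy, hnxy, hax, hay, hpart⟩
    · rw [h1'] at hm1; simp at hm1; exact absurd hm1.symm hne1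
    · exfalso
      have hu : u ∈ ({p, q} : Finset V) := hpart ▸ hmem u
      have hv : v ∈ ({p, q} : Finset V) := hpart ▸ hm1
      simp only [Finset.mem_insert, Finset.mem_singleton] at hu hv
      rcases hu with rfl | rfl <;> rcases hv with rfl | rfl <;> first
        | exact hne1 rfl
        | exact hna1 hadj
        | exact hna1 hadj.symm
    · have hu : u ∈ ({x, m, y} : Finset V) := hpart ▸ hmem u
      have hv : v ∈ ({x, m, y} : Finset V) := hpart ▸ hm1
      have hw : w ∈ ({x, m, y} : Finset V) := hpart ▸ hm2
      simp only [Finset.mem_insert, Finset.mem_singleton] at hu hv hw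
      have key : ∀ z, z ∈ ({x, m, y} : Finset V) → z ≠ u → ¬ G.Adj u z → 
          (u = x ∧ z = y) ∨ (u = y ∧ z = x) := by
        intro z hz hzu hnadj
        simp only [Finset.mem_insert, Finset.mem_singleton] at hz
        rcases hu with rfl | rfl | rfl <;> rcases hz with rfl | rfl | rfl <;> first
          | exact absurd rfl hzu.symm
          | exact absurd hxm hnadj
          | exact absurd hxm.symm hnadj
          | exact absurd hmy hnadj
          | exact absurd hmy.symm hnadj
          | exact Or.inl ⟨rfl, rfl⟩
          | exact Or.inr ⟨rfl, rfl⟩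
      have k1 := key v (hpart ▸ hm1) (Ne.symm hne1) hna1
      have k2 := key w (hpart ▸ hm2) (Ne.symm hne2) hna2
      rcases k1 with ⟨rfl, rfl⟩ | ⟨rfl, rfl⟩ <;> rcases k2 with ⟨h, rfl⟩ | ⟨h, rfl⟩ <;> first
        | rfl
        | exact absurd h.symm hxy
        | exact absurd h hxy
  refine ⟨D, A, ⟨fun u v h => h.1, fun u v w h1 h2 => hcrossm u v w h1.1 h2.1 h1.2 h2.2,
    fun u v h => ⟨hcrossd u v h.1 h.2, hcrossd v u h.1.symm fun hc => h.2 ((hsym u v).mpr hc)⟩⟩,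
    ⟨fun u v h => ?_, fun u v w h1 h2 => hAm u v w h1 h2, fun u v h => ⟨hAa u v h, hAa v u h.symm⟩⟩, ?_⟩
  · rw [SimpleGraph.compl_adj]; exact ⟨h.1, h.2.2⟩
  · -- cluster graph
    have hH : ∀ u v, ((G \ D) ⊔ A).Adj u v ↔ (u ≠ v ∧ v ∈ part u) := by
      intro u v
      constructor
      · intro h
        rcases h with h | h
        · rw [SimpleGraph.sdiff_adj] at h
          refine ⟨h.1.ne, ?_⟩
          by_contra hc
          exact h.2 ⟨h.1, hc⟩
        · exact ⟨h.1, h.2.1⟩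
      · intro ⟨hne, hmemv⟩
        by_cases hadj : G.Adj u v
        · exact Or.inl (by rw [SimpleGraph.sdiff_adj]; exact ⟨hadj, fun hc => hc.2 hmemv⟩)
        · exact Or.inr ⟨hne, hmemv, hadj⟩
    intro u v w h1 h2 hne
    rw [hH] at h1 h2 ⊢
    refine ⟨hne, ?_⟩
    rw [heq v u h1.2] at h2
    exact h2.2
end Plan
section Fwd
variable {V : Type*}

lemma forward_dir [Fintype V] [DecidableEq V] (G : SimpleGraph V)
    (a d : V → ℕ)
    (hT : TriangleFree G) (hC4 : C4Free G)
    (hSol : HasSolution G a d) :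
    ∃ M : SimpleGraph V, M ≤ G ∧ IsMatchingGraph M ∧
      (∀ y ∈ Yset G a, ∃ w, M.Adj y w) ∧
      (∀ w, d w = 0 → ∀ z, ¬ M.Adj w z) := by
  obtain ⟨D, A, ⟨hDG, hDm, hDd⟩, ⟨hAc, hAm, hAa⟩, hcl⟩ := hSol
  set H := (G \ D) ⊔ A with hH
  have hkept : ∀ u v, G.Adj u v → ¬ D.Adj u v → H.Adj u v := by
    intro u v h hnd
    exact Or.inl (by rw [SimpleGraph.sdiff_adj]; exact ⟨h, hnd⟩)
  have hHcases : ∀ u v, H.Adj u v → G.Adj u v ∨ A.Adj u v := by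
    intro u v h
    rcases h with h | h
    · exact Or.inl (SimpleGraph.sdiff_adj .. |>.mp h).1
    · exact Or.inr h
  refine ⟨D, hDG, hDm, ?_, ?_⟩
  swap
  · intro w hw z hz
    have := (hDd hz).1
    omega
  intro y hy
  by_contra hno
  push_neg at hno
  rcases hy with (hy | hy) | hy
  · -- y ∈ Zset
    obtain ⟨⟨hy2, _⟩, w, hyw, haw⟩ := hy
    obtain ⟨u, b, hub, hu, hb, hall⟩ := nbrs_of_ndeg_two hy2
    -- w is one of u,b ; pick the other neighbour
    have hw' : w = u ∨ w = b := hall w hyw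
    obtain ⟨u', hu', hu'w⟩ : ∃ u', G.Adj y u' ∧ u' ≠ w := by
      rcases hw' with rfl | rfl
      · exact ⟨b, hb, fun hc => hub hc.symm⟩
      · exact ⟨u, hu, hub⟩
    have h1 : H.Adj y u' := hkept _ _ hu' (hno u')
    have h2 : H.Adj y w := hkept _ _ hyw (hno w)
    have h3 : H.Adj u' w := hcl h1.symm h2 hu'w
    rcases hHcases _ _ h3 with h | h
    · exact hT hu' h hyw
    · have := (hAa h).2
      omega
  · -- y ∈ X2p
    obtain ⟨hy2, t, hyt, ht3⟩ := hy
    obtain ⟨u, b, hub, hu, hb, hall⟩ := nbrs_of_ndeg_two hy2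
    have ht' : t = u ∨ t = b := hall t hyt
    obtain ⟨u', hu', hu't⟩ : ∃ u', G.Adj y u' ∧ u' ≠ t := by
      rcases ht' with rfl | rfl
      · exact ⟨b, hb, fun hc => hub hc.symm⟩
      · exact ⟨u, hu, hub⟩
    -- t has a neighbour p ∉ {y} with t-p not deleted
    obtain ⟨p, q, hpq, hpy, hqy, hp, hq⟩ :
        ∃ p q, p ≠ q ∧ p ≠ y ∧ q ≠ y ∧ G.Adj t p ∧ G.Adj t q := by
      obtain ⟨c1, c2, c3, h12, h13, h23, hc1, hc2, hc3, hallt⟩ := nbrs_of_ndeg_three ht3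
      rcases hallt y hyt.symm with rfl | rfl | rfl
      · exact ⟨c2, c3, h23, fun hc => h12 hc.symm, fun hc => h13 hc.symm, hc2, hc3⟩
      · exact ⟨c1, c3, h13, h12, fun hc => h23 hc.symm, hc1, hc3⟩
      · exact ⟨c1, c2, h12, h13, h23, hc1, hc2⟩
    obtain ⟨p, hpy, hp, hpkept⟩ : ∃ p, p ≠ y ∧ G.Adj t p ∧ ¬ D.Adj t p := by
      by_cases h : D.Adj t p
      · refine ⟨q, hqy, hq, fun hc => hpq ?_⟩
        exact hDm h hc
      · exact ⟨p, hpy, hp, h⟩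
    have hyt' : H.Adj y t := hkept _ _ hyt (hno t)
    have htp : H.Adj t p := hkept _ _ hp hpkept
    have hyu : H.Adj y u' := hkept _ _ hu' (hno u')
    -- u' ≠ p (else triangle y-u'-t)
    have hu'p : u' ≠ p := by
      rintro rfl
      exact hT hu' hp.symm hyt
    have hyp : H.Adj y p := hcl hyt' htp (Ne.symm hpy)
    have hut : H.Adj u' t := hcl hyu.symm hyt' hu't
    have hup : H.Adj u' p := hcl hut htp hu'p
    -- classify
    have hutA : A.Adj u' t := by
      rcases hHcases _ _ hut with h | h
      · exact absurd h (fun h => hT hu' h hyt)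
      · exact h
    have hypA : A.Adj y p := by
      rcases hHcases _ _ hyp with h | h
      · exact absurd h (fun h => hT hyt hp h)
      · exact h
    have hupG : G.Adj u' p := by
      rcases hHcases _ _ hup with h | h
      · exact h
      · exact absurd (hAm hutA h) (by rintro rfl; exact hp.ne' rfl)
    -- C4 : y - u' - p - t - y
    exact hC4 (Ne.symm hpy) hu't hu' hupG hp.symm hyt.symm
  · -- y ∈ X3
    obtain ⟨c1, c2, c3, h12, h13, h23, hc1, hc2, hc3, _⟩ := nbrs_of_ndeg_three hy
    have k1 : H.Adj y c1 := hkept _ _ hc1 (hno c1)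
    have k2 : H.Adj y c2 := hkept _ _ hc2 (hno c2)
    have k3 : H.Adj y c3 := hkept _ _ hc3 (hno c3)
    have h12' : H.Adj c1 c2 := hcl k1.symm k2 h12
    have h13' : H.Adj c1 c3 := hcl k1.symm k3 h13
    have hA12 : A.Adj c1 c2 := by
      rcases hHcases _ _ h12' with h | h
      · exact absurd h (fun h => hT hc1 h hc2)
      · exact h
    have hA13 : A.Adj c1 c3 := by
      rcases hHcases _ _ h13' with h | h
      · exact absurd h (fun h => hT hc1 h hc3)
      · exact h
    exact h23 (hAm hA12 hA13)
end Fwd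
section Chop
variable {V : Type*}

/-- number of adjacent ordered pairs -/
noncomputable def muE (S : SimpleGraph V) : ℕ := {p : V × V | S.Adj p.1 p.2}.ncard

lemma muE_lt [Finite V] {S : SimpleGraph V} {s : Set (Sym2 V)} {u v : V}
    (h : S.Adj u v) (hm : s(u, v) ∈ s) : muE (S.deleteEdges s) < muE S := by
  apply Set.ncard_lt_ncard ?_ (Set.toFinite _)
  constructor
  · rintro ⟨a, b⟩ hab
    exact ((SimpleGraph.deleteEdges_adj).mp hab).1
  · intro hsub
    have h1 : (u, v) ∈ {p : V × V | S.Adj p.1 p.2} := h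
    have h2 := hsub h1
    simp only [Set.mem_setOf_eq, SimpleGraph.deleteEdges_adj] at h2
    exact h2.2 hm

lemma muE_zero [Finite V] {S : SimpleGraph V} (h : muE S = 0) : ∀ u v, ¬ S.Adj u v := by
  intro u v hadj
  rw [muE, Set.ncard_eq_zero (Set.toFinite _)] at h
  have : (u, v) ∈ {p : V × V | S.Adj p.1 p.2} := hadj
  rw [h] at this
  exact this

lemma override_facts [DecidableEq V] (K : Finset V) (part' : V → Finset V)
    (hmem' : ∀ v, v ∈ part' v) (heq' : ∀ u v, u ∈ part' v → part' u = part' v)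
    (hsing : ∀ t, t ∈ K → part' t = {t}) :
    (∀ v, v ∈ (if v ∈ K then K else part' v)) ∧
    (∀ u v, u ∈ (if v ∈ K then K else part' v) →
      (if u ∈ K then K else part' u) = (if v ∈ K then K else part' v)) := by
  constructor
  · intro v
    by_cases h : v ∈ K <;> simp [h, hmem']
  · intro u v hu
    by_cases hv : v ∈ K
    · simp only [hv, if_true] at hu ⊢
      simp [hu]
    · simp only [hv, if_false] at hu ⊢
      have hnuK : u ∉ K := by
        intro huK
        have h1 := heq' u v hu
        rw [hsing u huK] at h1
        have : v ∈ ({u} : Finset V) := h1 ▸ hmem' v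
        simp at this
        exact hv (this ▸ huK)
      simp only [hnuK, if_false]
      exact heq' u v hu
end Chop
section Chop2
variable {V : Type*}

structure ChopOut [DecidableEq V] (S : SimpleGraph V) (free : V → Prop) (part : V → Finset V) : Prop where
  mem : ∀ v, v ∈ part v
  part_eq : ∀ u v, u ∈ part v → part u = part v
  iso : ∀ v, (∀ z, ¬ S.Adj v z) → part v = {v}
  shape : ∀ v, (part v = {v}) ∨ (∃ p q, p ≠ q ∧ S.Adj p q ∧ part v = {p, q}) ∨
    (∃ x m y, S.Adj x m ∧ S.Adj m y ∧ x ≠ y ∧ ¬ S.Adj x y ∧ part v = {x, m, y})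
  crossfree : ∀ u v, S.Adj u v → v ∉ part u → free u ∧ free v
  crossuniq : ∀ u v w, S.Adj u v → S.Adj u w → v ∉ part u → w ∉ part u → v = w

lemma chop_trivial [DecidableEq V] {S : SimpleGraph V} {free : V → Prop}
    (hE : ∀ u v, ¬ S.Adj u v) : ∃ part : V → Finset V, ChopOut S free part := by
  refine ⟨fun v => {v}, ⟨fun v => by simp, fun u v h => by
    simp only [Finset.mem_singleton] at h; rw [h], fun v _ => rfl,
    fun v => Or.inl rfl, fun u v h => absurd h (hE u v),
    fun u v w h => absurd h (hE u v)⟩⟩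

lemma chop [Fintype V] [DecidableEq V] :
    ∀ (n : ℕ) (S : SimpleGraph V) (free : V → Prop),
      muE S ≤ n →
      (∀ ⦃x y z : V⦄, S.Adj x y → S.Adj y z → S.Adj x z → False) →
      (∀ ⦃v a b c : V⦄, S.Adj v a → S.Adj v b → S.Adj v c → a = b ∨ a = c ∨ b = c) →
      (∀ ⦃v a b : V⦄, S.Adj v a → S.Adj v b → a ≠ b → free v) →
      ∃ part : V → Finset V, ChopOut S free part := by
  intro n
  induction n with
  | zero =>
    intro S free hmu htri hmax hfree2
    exact chop_trivial (muE_zero (Nat.le_zero.mp hmu))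
  | succ n ih =>
    intro S free hmu htri hmax hfree2
    by_cases hE : ∀ u v, ¬ S.Adj u v
    · exact chop_trivial hE
    push_neg at hE
    obtain ⟨u0, v0, h0⟩ := hE
    by_cases hdeg1 : ∃ u w, S.Adj u w ∧ ∀ z, S.Adj u z → z = w
    · obtain ⟨u, w, huw, hu1⟩ := hdeg1
      have huwne : u ≠ w := huw.ne
      by_cases hw2 : ∃ z, S.Adj w z ∧ z ≠ u
      · obtain ⟨z, hwz, hzu⟩ := hw2
        have hwnb : ∀ t, S.Adj w t → t = u ∨ t = z := by
          intro t ht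
          rcases hmax huw.symm hwz ht with h | h | h
          · exact absurd h.symm hzu
          · exact Or.inl h.symm
          · exact Or.inr h.symm
        have hwzne : w ≠ z := hwz.ne
        by_cases hz2 : ∃ t, S.Adj z t ∧ t ≠ w
        · -- CASE A3 : cut the edge w-z, cluster {u,w}
          obtain ⟨t0, hzt0, ht0w⟩ := hz2
          have hznb : ∀ s', S.Adj z s' → s' = w ∨ s' = t0 := by
            intro s' hs
            rcases hmax hwz.symm hzt0 hs with h | h | h
            · exact absurd h ht0w.symm
            · exact Or.inl h.symm
            · exact Or.inr h.symm
          have hfw : free w := hfree2 huw.symm hwz (Ne.symm hzu)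
          have hfz : free z := hfree2 hwz.symm hzt0 (fun hc => ht0w hc.symm)
          set E : Set (Sym2 V) := {s(u, w), s(w, z)} with hE'
          set S' := S.deleteEdges E with hS'
          have hle : ∀ ⦃a b⦄, S'.Adj a b → S.Adj a b :=
            fun a b h => (SimpleGraph.deleteEdges_adj.mp h).1
          have hzu' : z ≠ u := hzu
          -- u and w are isolated in S'
          have huiso : ∀ t, ¬ S'.Adj u t := by
            intro t ht
            obtain ⟨hadj, hmem⟩ := SimpleGraph.deleteEdges_adj.mp ht
            have := hu1 t hadj; subst this
            exact hmem (Or.inl rfl)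
          have hwiso : ∀ t, ¬ S'.Adj w t := by
            intro t ht
            obtain ⟨hadj, hmem⟩ := SimpleGraph.deleteEdges_adj.mp ht
            rcases hwnb t hadj with rfl | rfl
            · exact hmem (Or.inl (Sym2.eq_swap))
            · exact hmem (Or.inr rfl)
          -- z keeps only edges to t0 in S'
          have hznb' : ∀ s', S'.Adj z s' → s' = t0 := by
            intro s' hs
            obtain ⟨hadj, hmem⟩ := SimpleGraph.deleteEdges_adj.mp hs
            rcases hznb s' hadj with rfl | rfl
            · exact absurd (Or.inr (Sym2.eq_swap)) hmem
            · rfl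
          have hmu' : muE S' ≤ n := by
            have hlt : muE S' < muE S := by
              rw [hS']; exact muE_lt huw (Or.inl rfl)
            omega
          obtain ⟨part', hout'⟩ := ih S' (fun t => free t ∧ t ≠ z) hmu'
            (fun x y z hx hy hz => htri (hle hx) (hle hy) (hle hz))
            (fun v a b c ha hb hc => hmax (hle ha) (hle hb) (hle hc))
            (by
              intro v a b ha hb hab
              refine ⟨hfree2 (hle ha) (hle hb) hab, ?_⟩
              rintro rfl
              have h1 := hznb' a ha
              have h2 := hznb' b hb
              exact hab (h1.trans h2.symm))
          set K : Finset V := {u, w} with hK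
          have hKu : u ∈ K := by simp [hK]
          have hKw : w ∈ K := by simp [hK]
          have hzK : z ∉ K := by simp [hK, hzu', hwzne.symm]
          have hsing : ∀ t, t ∈ K → part' t = {t} := by
            intro t ht
            simp only [hK, Finset.mem_insert, Finset.mem_singleton] at ht
            rcases ht with rfl | rfl
            · exact hout'.iso t huiso
            · exact hout'.iso t hwiso
          obtain ⟨hmem, heq⟩ := override_facts K part' hout'.mem hout'.part_eq hsing
          refine ⟨fun t => if t ∈ K then K else part' t, ⟨hmem, heq, ?_, ?_, ?_, ?_⟩⟩
          · -- iso
            intro v hv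
            have hvK : v ∉ K := by
              simp only [hK, Finset.mem_insert, Finset.mem_singleton]
              rintro (rfl | rfl)
              · exact hv w huw
              · exact hv u huw.symm
            simp only [hvK, if_false]
            exact hout'.iso v (fun t ht => hv t (hle ht))
          · -- shape
            intro v
            by_cases hvK : v ∈ K
            · refine Or.inr (Or.inl ⟨u, w, huwne, huw, ?_⟩)
              exact (if_pos hvK).trans hK
            · simp only [hvK, if_false]
              rcases hout'.shape v with h | ⟨p, q, hpq, hadj, hp⟩ | ⟨x, m, y, hxm, hmy, hxy, hnxy, hp⟩
              · exact Or.inl h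
              · exact Or.inr (Or.inl ⟨p, q, hpq, hle hadj, hp⟩)
              · refine Or.inr (Or.inr ⟨x, m, y, hle hxm, hle hmy, hxy, ?_, hp⟩)
                intro hadjS
                -- x has an S'-edge, so x ∉ {u,w}; same for y; but the only S-edges not in S'
                -- are u-w and w-z, which have an S'-isolated endpoint among {u,w}
                have hx' : ∀ t ∈ K, ¬ S'.Adj t x := by
                  intro t ht hc
                  simp only [hK, Finset.mem_insert, Finset.mem_singleton] at ht
                  rcases ht with rfl | rfl
                  · exact huiso x hc
                  · exact hwiso x hc
                have hxK : x ∉ K := by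
                  intro hc
                  simp only [hK, Finset.mem_insert, Finset.mem_singleton] at hc
                  rcases hc with rfl | rfl
                  · exact huiso m hxm
                  · exact hwiso m hxm
                have hyK : y ∉ K := by
                  intro hc
                  simp only [hK, Finset.mem_insert, Finset.mem_singleton] at hc
                  rcases hc with rfl | rfl
                  · exact huiso m hmy.symm
                  · exact hwiso m hmy.symm
                have : ¬ S'.Adj x y := hnxy
                rw [SimpleGraph.deleteEdges_adj] at this
                push_neg at this
                have hmemE := this hadjS
                simp only [hE', Set.mem_insert_iff, Set.mem_singleton_iff, Sym2.eq_iff] at hmemE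
                rcases hmemE with (⟨rfl, rfl⟩ | ⟨rfl, rfl⟩) | (⟨rfl, rfl⟩ | ⟨rfl, rfl⟩)
                · exact hxK hKu
                · exact hxK hKw
                · exact hxK hKw
                · exact hyK hKw
          · -- crossfree
            intro p q hpq hq
            by_cases hpK : p ∈ K
            · simp only [hpK, if_true] at hq
              simp only [hK, Finset.mem_insert, Finset.mem_singleton] at hpK
              rcases hpK with rfl | rfl
              · -- p = u : only neighbour w ∈ K, not crossing
                have := hu1 q hpq; subst this
                exact absurd hKw hq
              · -- p = w : neighbours u,z ; crossing one is z
                rcases hwnb q hpq with rfl | rfl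
                · exact absurd hKu hq
                · exact ⟨hfw, hfz⟩
            · simp only [hpK, if_false] at hq
              by_cases hqK : q ∈ K
              · -- edge from outside into {u,w}: must be z-w
                simp only [hK, Finset.mem_insert, Finset.mem_singleton] at hqK
                rcases hqK with rfl | rfl
                · -- q = u: p is a neighbour of u, so p = w ∈ K, contradiction
                  have := hu1 p hpq.symm; subst this
                  exact absurd hKw hpK
                · rcases hwnb p hpq.symm with rfl | rfl
                  · exact absurd hKu hpK
                  · exact ⟨hfz, hfw⟩
              · -- S'-edge
                have hS'pq : S'.Adj p q := by
                  rw [SimpleGraph.deleteEdges_adj]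
                  refine ⟨hpq, ?_⟩
                  simp only [hE', Set.mem_insert_iff, Set.mem_singleton_iff, Sym2.eq_iff]
                  push_neg
                  constructor
                  · constructor
                    · rintro rfl; exact absurd hKu hpK
                    · rintro rfl; exact absurd hKw hpK
                  · constructor
                    · rintro rfl; exact absurd hKw hpK
                    · rintro rfl rfl; exact hqK hKw
                have := hout'.crossfree p q hS'pq hq
                exact ⟨this.1.1, this.2.1⟩
          · -- crossuniq
            intro p q r hpq hpr hq hr
            by_cases hpK : p ∈ K
            · simp only [hpK, if_true] at hq hr
              simp only [hK, Finset.mem_insert, Finset.mem_singleton] at hpK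
              rcases hpK with rfl | rfl
              · have h1 := hu1 q hpq; have h2 := hu1 r hpr
                rw [h1, h2]
              · rcases hwnb q hpq with rfl | rfl
                · exact absurd hKu hq
                · rcases hwnb r hpr with rfl | rfl
                  · exact absurd hKu hr
                  · rfl
            · simp only [hpK, if_false] at hq hr
              -- for each crossing neighbour: either it is in K (then edge is w-p with p=z)
              -- or it is an S'-crossing (then free' p, i.e. p ≠ z ...)
              have hclass : ∀ s', S.Adj p s' → s' ∉ part' p → s' = w ∨ (S'.Adj p s' ∧ s' ∉ part' p) := by
                intro s' hs hns
                by_cases hsK : s' ∈ K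
                · simp only [hK, Finset.mem_insert, Finset.mem_singleton] at hsK
                  rcases hsK with rfl | rfl
                  · have := hu1 p hs.symm; subst this; exact absurd hKw hpK
                  · exact Or.inl rfl
                · refine Or.inr ⟨?_, hns⟩
                  rw [SimpleGraph.deleteEdges_adj]
                  refine ⟨hs, ?_⟩
                  simp only [hE', Set.mem_insert_iff, Set.mem_singleton_iff, Sym2.eq_iff]
                  push_neg
                  refine ⟨⟨?_, ?_⟩, ⟨?_, ?_⟩⟩
                  · rintro rfl; exact absurd hKu hpK
                  · rintro rfl; exact absurd hKw hpK
                  · rintro rfl; exact absurd hKw hpK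
                  · rintro rfl rfl; exact hsK hKw
              rcases hclass q hpq hq with rfl | ⟨hq', hq''⟩
              · rcases hclass r hpr hr with rfl | ⟨hr', hr''⟩
                · rfl
                · -- p adjacent to w means p ∈ {u,z}; p ≠ u (u∈K); so p = z;
                  -- but then S'-crossing at z gives free' z : z ≠ z, contradiction
                  exfalso
                  rcases hwnb p hpq.symm with rfl | rfl
                  · exact hpK hKu
                  · exact (hout'.crossfree p r hr' hr'').1.2 rfl
              · rcases hclass r hpr hr with rfl | ⟨hr', hr''⟩
                · exfalso
                  rcases hwnb p hpr.symm with rfl | rfl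
                  · exact hpK hKu
                  · exact (hout'.crossfree p q hq' hq'').1.2 rfl
                · exact hout'.crossuniq p q r hq' hr' hq'' hr''
        · -- CASE A2 : cluster {u,w,z}
          push_neg at hz2
          have hz1 : ∀ t, S.Adj z t → t = w := hz2
          have huzne : u ≠ z := fun hc => hzu hc.symm
          have hnuz : ¬ S.Adj u z := by
            intro hc
            exact hwzne ((hu1 z hc).symm)
          set E : Set (Sym2 V) := {s(u, w), s(w, z)} with hE'
          set S' := S.deleteEdges E with hS'
          have hle : ∀ ⦃a b⦄, S'.Adj a b → S.Adj a b :=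
            fun a b h => (SimpleGraph.deleteEdges_adj.mp h).1
          have huiso : ∀ t, ¬ S'.Adj u t := by
            intro t ht
            obtain ⟨hadj, hmem⟩ := SimpleGraph.deleteEdges_adj.mp ht
            have := hu1 t hadj; subst this
            exact hmem (Or.inl rfl)
          have hwiso : ∀ t, ¬ S'.Adj w t := by
            intro t ht
            obtain ⟨hadj, hmem⟩ := SimpleGraph.deleteEdges_adj.mp ht
            rcases hwnb t hadj with rfl | rfl
            · exact hmem (Or.inl (Sym2.eq_swap))
            · exact hmem (Or.inr rfl)
          have hziso : ∀ t, ¬ S'.Adj z t := by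
            intro t ht
            obtain ⟨hadj, hmem⟩ := SimpleGraph.deleteEdges_adj.mp ht
            have := hz1 t hadj; subst this
            exact hmem (Or.inr (Sym2.eq_swap))
          have hmu' : muE S' ≤ n := by
            have hlt : muE S' < muE S := by
              rw [hS']; exact muE_lt huw (Or.inl rfl)
            omega
          obtain ⟨part', hout'⟩ := ih S' free hmu'
            (fun x y z hx hy hz => htri (hle hx) (hle hy) (hle hz))
            (fun v a b c ha hb hc => hmax (hle ha) (hle hb) (hle hc))
            (fun v a b ha hb hab => hfree2 (hle ha) (hle hb) hab)
          set K : Finset V := {u, w, z} with hK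
          have hKu : u ∈ K := by simp [hK]
          have hKw : w ∈ K := by simp [hK]
          have hKz : z ∈ K := by simp [hK]
          have hKiso : ∀ t ∈ K, ∀ s', ¬ S'.Adj t s' := by
            intro t ht
            simp only [hK, Finset.mem_insert, Finset.mem_singleton] at ht
            rcases ht with rfl | rfl | rfl
            · exact huiso
            · exact hwiso
            · exact hziso
          have hsing : ∀ t, t ∈ K → part' t = {t} :=
            fun t ht => hout'.iso t (hKiso t ht)
          -- every S-edge not in S' has both ends in K
          have hSK : ∀ ⦃p q⦄, S.Adj p q → ¬ S'.Adj p q → p ∈ K ∧ q ∈ K := by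
            intro p q hpq hnpq
            rw [SimpleGraph.deleteEdges_adj] at hnpq
            push_neg at hnpq
            have := hnpq hpq
            simp only [hE', Set.mem_insert_iff, Set.mem_singleton_iff, Sym2.eq_iff] at this
            rcases this with (⟨rfl, rfl⟩ | ⟨rfl, rfl⟩) | (⟨rfl, rfl⟩ | ⟨rfl, rfl⟩)
            · exact ⟨hKu, hKw⟩
            · exact ⟨hKw, hKu⟩
            · exact ⟨hKw, hKz⟩
            · exact ⟨hKz, hKw⟩
          obtain ⟨hmem, heq⟩ := override_facts K part' hout'.mem hout'.part_eq hsing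
          refine ⟨fun t => if t ∈ K then K else part' t, ⟨hmem, heq, ?_, ?_, ?_, ?_⟩⟩
          · intro v hv
            have hvK : v ∉ K := by
              simp only [hK, Finset.mem_insert, Finset.mem_singleton]
              rintro (rfl | rfl | rfl)
              · exact hv w huw
              · exact hv u huw.symm
              · exact hv w hwz.symm
            simp only [hvK, if_false]
            exact hout'.iso v (fun t ht => hv t (hle ht))
          · intro v
            by_cases hvK : v ∈ K
            · refine Or.inr (Or.inr ⟨u, w, z, huw, hwz, huzne, hnuz, ?_⟩)
              exact (if_pos hvK).trans hK
            · simp only [hvK, if_false]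
              rcases hout'.shape v with h | ⟨p, q, hpq, hadj, hp⟩ |
                ⟨x, m, y, hxm, hmy, hxy, hnxy, hp⟩
              · exact Or.inl h
              · exact Or.inr (Or.inl ⟨p, q, hpq, hle hadj, hp⟩)
              · refine Or.inr (Or.inr ⟨x, m, y, hle hxm, hle hmy, hxy, ?_, hp⟩)
                intro hadjS
                have := (hSK hadjS hnxy).1
                exact hKiso x this m hxm
          · intro p q hpq hq
            by_cases hS'pq : S'.Adj p q
            · have hpK : p ∉ K := fun hc => hKiso p hc q hS'pq
              have hqK : q ∉ K := fun hc => hKiso q hc p hS'pq.symm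
              simp only [hpK, if_false] at hq
              exact hout'.crossfree p q hS'pq hq
            · exfalso
              obtain ⟨hpK, hqK⟩ := hSK hpq hS'pq
              simp only [hpK, if_true] at hq
              exact hq hqK
          · intro p q r hpq hpr hq hr
            by_cases hpK : p ∈ K
            · exfalso
              simp only [hpK, if_true] at hq
              have hS'pq : ¬ S'.Adj p q := fun hc => hKiso p hpK q hc
              exact hq (hSK hpq hS'pq).2
            · simp only [hpK, if_false] at hq hr
              have hS'pq : S'.Adj p q := by
                by_contra hc
                exact hpK (hSK hpq hc).1
              have hS'pr : S'.Adj p r := by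
                by_contra hc
                exact hpK (hSK hpr hc).1
              exact hout'.crossuniq p q r hS'pq hS'pr hq hr
      · -- CASE A1 : cluster {u,w}
        push_neg at hw2
        have hw1 : ∀ z, S.Adj w z → z = u := hw2
        set E : Set (Sym2 V) := {s(u, w)} with hE'
        set S' := S.deleteEdges E with hS'
        have hle : ∀ ⦃a b⦄, S'.Adj a b → S.Adj a b :=
          fun a b h => (SimpleGraph.deleteEdges_adj.mp h).1
        have huiso : ∀ t, ¬ S'.Adj u t := by
          intro t ht
          obtain ⟨hadj, hmem⟩ := SimpleGraph.deleteEdges_adj.mp ht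
          have := hu1 t hadj; subst this
          exact hmem rfl
        have hwiso : ∀ t, ¬ S'.Adj w t := by
          intro t ht
          obtain ⟨hadj, hmem⟩ := SimpleGraph.deleteEdges_adj.mp ht
          have := hw1 t hadj; subst this
          exact hmem (Sym2.eq_swap)
        have hmu' : muE S' ≤ n := by
          have hlt : muE S' < muE S := by
            rw [hS']; exact muE_lt huw rfl
          omega
        obtain ⟨part', hout'⟩ := ih S' free hmu'
          (fun x y z hx hy hz => htri (hle hx) (hle hy) (hle hz))
          (fun v a b c ha hb hc => hmax (hle ha) (hle hb) (hle hc))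
          (fun v a b ha hb hab => hfree2 (hle ha) (hle hb) hab)
        set K : Finset V := {u, w} with hK
        have hKu : u ∈ K := by simp [hK]
        have hKw : w ∈ K := by simp [hK]
        have hKiso : ∀ t ∈ K, ∀ s', ¬ S'.Adj t s' := by
          intro t ht
          simp only [hK, Finset.mem_insert, Finset.mem_singleton] at ht
          rcases ht with rfl | rfl
          · exact huiso
          · exact hwiso
        have hsing : ∀ t, t ∈ K → part' t = {t} :=
          fun t ht => hout'.iso t (hKiso t ht)
        have hSK : ∀ ⦃p q⦄, S.Adj p q → ¬ S'.Adj p q → p ∈ K ∧ q ∈ K := by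
          intro p q hpq hnpq
          rw [SimpleGraph.deleteEdges_adj] at hnpq
          push_neg at hnpq
          have := hnpq hpq
          simp only [hE', Set.mem_singleton_iff, Sym2.eq_iff] at this
          rcases this with ⟨rfl, rfl⟩ | ⟨rfl, rfl⟩
          · exact ⟨hKu, hKw⟩
          · exact ⟨hKw, hKu⟩
        obtain ⟨hmem, heq⟩ := override_facts K part' hout'.mem hout'.part_eq hsing
        refine ⟨fun t => if t ∈ K then K else part' t, ⟨hmem, heq, ?_, ?_, ?_, ?_⟩⟩
        · intro v hv
          have hvK : v ∉ K := by
            simp only [hK, Finset.mem_insert, Finset.mem_singleton]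
            rintro (rfl | rfl)
            · exact hv w huw
            · exact hv u huw.symm
          simp only [hvK, if_false]
          exact hout'.iso v (fun t ht => hv t (hle ht))
        · intro v
          by_cases hvK : v ∈ K
          · refine Or.inr (Or.inl ⟨u, w, huwne, huw, ?_⟩)
            exact (if_pos hvK).trans hK
          · simp only [hvK, if_false]
            rcases hout'.shape v with h | ⟨p, q, hpq, hadj, hp⟩ |
              ⟨x, m, y, hxm, hmy, hxy, hnxy, hp⟩
            · exact Or.inl h
            · exact Or.inr (Or.inl ⟨p, q, hpq, hle hadj, hp⟩)
            · refine Or.inr (Or.inr ⟨x, m, y, hle hxm, hle hmy, hxy, ?_, hp⟩)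
              intro hadjS
              exact hKiso x (hSK hadjS hnxy).1 m hxm
        · intro p q hpq hq
          by_cases hS'pq : S'.Adj p q
          · have hpK : p ∉ K := fun hc => hKiso p hc q hS'pq
            have hqK : q ∉ K := fun hc => hKiso q hc p hS'pq.symm
            simp only [hpK, if_false] at hq
            exact hout'.crossfree p q hS'pq hq
          · exfalso
            obtain ⟨hpK, hqK⟩ := hSK hpq hS'pq
            simp only [hpK, if_true] at hq
            exact hq hqK
        · intro p q r hpq hpr hq hr
          by_cases hpK : p ∈ K
          · exfalso
            simp only [hpK, if_true] at hq
            have hS'pq : ¬ S'.Adj p q := fun hc => hKiso p hpK q hc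
            exact hq (hSK hpq hS'pq).2
          · simp only [hpK, if_false] at hq hr
            have hS'pq : S'.Adj p q := by
              by_contra hc
              exact hpK (hSK hpq hc).1
            have hS'pr : S'.Adj p r := by
              by_contra hc
              exact hpK (hSK hpr hc).1
            exact hout'.crossuniq p q r hS'pq hS'pr hq hr
    · -- CASE B : no degree-1 vertex; cut any edge
      push_neg at hdeg1
      have hsec : ∀ ⦃p q : V⦄, S.Adj p q → ∃ z, S.Adj p z ∧ z ≠ q := hdeg1
      obtain ⟨z1, hz1, hz1ne⟩ := hsec h0
      obtain ⟨z2, hz2, hz2ne⟩ := hsec h0.symm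
      have hfu0 : free u0 := hfree2 h0 hz1 (Ne.symm hz1ne)
      have hfv0 : free v0 := hfree2 h0.symm hz2 (Ne.symm hz2ne)
      set E : Set (Sym2 V) := {s(u0, v0)} with hE'
      set S' := S.deleteEdges E with hS'
      have hle : ∀ ⦃a b⦄, S'.Adj a b → S.Adj a b :=
        fun a b h => (SimpleGraph.deleteEdges_adj.mp h).1
      have hdel : ¬ S'.Adj u0 v0 := by
        intro h
        exact (SimpleGraph.deleteEdges_adj.mp h).2 rfl
      have hSE : ∀ ⦃p q⦄, S.Adj p q → ¬ S'.Adj p q →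
          (p = u0 ∧ q = v0) ∨ (p = v0 ∧ q = u0) := by
        intro p q hpq hnpq
        rw [SimpleGraph.deleteEdges_adj] at hnpq
        push_neg at hnpq
        have := hnpq hpq
        simpa only [hE', Set.mem_singleton_iff, Sym2.eq_iff] using this
      have hmu' : muE S' ≤ n := by
        have hlt : muE S' < muE S := by
          rw [hS']; exact muE_lt h0 rfl
        omega
      obtain ⟨part', hout'⟩ := ih S' (fun t => free t ∧ t ≠ u0 ∧ t ≠ v0) hmu'
        (fun x y z hx hy hz => htri (hle hx) (hle hy) (hle hz))
        (fun v a b c ha hb hc => hmax (hle ha) (hle hb) (hle hc))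
        (by
          intro v a b ha hb hab
          refine ⟨hfree2 (hle ha) (hle hb) hab, ?_, ?_⟩
          · rintro rfl
            have ha' : a ≠ v0 := by
              rintro rfl
              exact hdel ha
            have hb' : b ≠ v0 := by
              rintro rfl
              exact hdel hb
            rcases hmax h0 (hle ha) (hle hb) with h | h | h
            · exact ha' h.symm
            · exact hb' h.symm
            · exact hab h
          · rintro rfl
            have ha' : a ≠ u0 := by
              rintro rfl
              exact hdel ha.symm
            have hb' : b ≠ u0 := by
              rintro rfl
              exact hdel hb.symm
            rcases hmax h0.symm (hle ha) (hle hb) with h | h | h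
            · exact ha' h.symm
            · exact hb' h.symm
            · exact hab h)
      -- v0 is not in the part of u0
      have hcross0 : v0 ∉ part' u0 := by
        intro hc
        have hu0m : u0 ∈ part' u0 := hout'.mem u0
        rcases hout'.shape u0 with h | ⟨p, q, hpq, hadj, hp⟩ |
          ⟨x, m, y, hxm, hmy, hxy, hnxy, hp⟩
        · rw [h] at hc
          simp only [Finset.mem_singleton] at hc
          exact h0.ne hc.symm
        · rw [hp] at hc hu0m
          simp only [Finset.mem_insert, Finset.mem_singleton] at hc hu0m
          rcases hu0m with rfl | rfl <;> rcases hc with rfl | rfl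
          · exact h0.ne rfl
          · exact hdel hadj
          · exact hdel hadj.symm
          · exact h0.ne rfl
        · rw [hp] at hc hu0m
          simp only [Finset.mem_insert, Finset.mem_singleton] at hc hu0m
          rcases hu0m with rfl | rfl | rfl <;> rcases hc with rfl | rfl | rfl
          · exact h0.ne rfl
          · exact hdel hxm
          · exact htri (hle hxm) (hle hmy) h0
          · exact hdel hxm.symm
          · exact h0.ne rfl
          · exact hdel hmy
          · exact htri (hle hxm) (hle hmy) h0.symm
          · exact hdel hmy.symm
          · exact h0.ne rfl
      have hcross0' : u0 ∉ part' v0 := by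
        intro hc
        rw [hout'.part_eq u0 v0 hc] at hcross0
        exact hcross0 (hout'.mem v0)
      refine ⟨part', ⟨hout'.mem, hout'.part_eq, ?_, ?_, ?_, ?_⟩⟩
      · intro v hv
        exact hout'.iso v (fun t ht => hv t (hle ht))
      · intro v
        rcases hout'.shape v with h | ⟨p, q, hpq, hadj, hp⟩ |
          ⟨x, m, y, hxm, hmy, hxy, hnxy, hp⟩
        · exact Or.inl h
        · exact Or.inr (Or.inl ⟨p, q, hpq, hle hadj, hp⟩)
        · refine Or.inr (Or.inr ⟨x, m, y, hle hxm, hle hmy, hxy, ?_, hp⟩)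
          intro hadjS
          exact htri (hle hxm) (hle hmy) hadjS
      · intro p q hpq hq
        by_cases hS'pq : S'.Adj p q
        · have := hout'.crossfree p q hS'pq hq
          exact ⟨this.1.1, this.2.1⟩
        · rcases hSE hpq hS'pq with ⟨rfl, rfl⟩ | ⟨rfl, rfl⟩
          · exact ⟨hfu0, hfv0⟩
          · exact ⟨hfv0, hfu0⟩
      · intro p q r hpq hpr hq hr
        by_cases hS'pq : S'.Adj p q <;> by_cases hS'pr : S'.Adj p r
        · exact hout'.crossuniq p q r hS'pq hS'pr hq hr
        · exfalso
          rcases hSE hpr hS'pr with ⟨rfl, rfl⟩ | ⟨rfl, rfl⟩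
          · exact (hout'.crossfree p q hS'pq hq).1.2.1 rfl
          · exact (hout'.crossfree p q hS'pq hq).1.2.2 rfl
        · exfalso
          rcases hSE hpq hS'pq with ⟨rfl, rfl⟩ | ⟨rfl, rfl⟩
          · exact (hout'.crossfree p r hS'pr hr).1.2.1 rfl
          · exact (hout'.crossfree p r hS'pr hr).1.2.2 rfl
        · rcases hSE hpq hS'pq with ⟨rfl, rfl⟩ | ⟨rfl, rfl⟩ <;>
            rcases hSE hpr hS'pr with ⟨h1, rfl⟩ | ⟨h1, rfl⟩
          · rfl
          · exact absurd h1 h0.ne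
          · exact absurd h1 h0.ne'
          · rfl
end Chop2
section Bwd
variable {V : Type*}

lemma backward_dir [Fintype V] [DecidableEq V] (G : SimpleGraph V)
    (a d : V → ℕ) (ha : ∀ v, a v ≤ 1) (hd : ∀ v, d v ≤ 1)
    (hT : TriangleFree G) (hdeg : MaxDegLE G 3)
    (h1 : ∀ v, 2 ≤ ndeg G v → d v = 1)
    (h2 : ∀ v w, ndeg G v = 3 → G.Adj v w → a w ≠ 0)
    (h3 : ∀ v w, ndeg G v = 3 → ndeg G w = 3 → ¬ G.Adj v w)
    (M : SimpleGraph V) (hMG : M ≤ G) (hMm : IsMatchingGraph M)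
    (hMcov : ∀ y ∈ Yset G a, ∃ w, M.Adj y w)
    (hMav : ∀ w, d w = 0 → ∀ z, ¬ M.Adj w z) :
    HasSolution G a d := by
  classical
  have hMd : ∀ ⦃u v⦄, M.Adj u v → d u = 1 := by
    intro u v h
    have h0 := hd u
    have h1' : d u ≠ 0 := fun hc => hMav u hc v h
    omega
  -- the partner function
  set mp : V → V := fun v => if h : ∃ w, M.Adj v w then h.choose else v with hmpdef
  have hmp : ∀ v, (∃ w, M.Adj v w) → M.Adj v (mp v) := by
    intro v h
    simp only [hmpdef, dif_pos h]
    exact h.choose_spec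
  have hcov3 : ∀ ⦃v⦄, ndeg G v = 3 → M.Adj v (mp v) := by
    intro v hv
    exact hmp v (hMcov v (Set.mem_union_right _ hv))
  have hdeg2 : ∀ ⦃v u⦄, ndeg G v = 3 → G.Adj v u → ndeg G u ≤ 2 := by
    intro v u hv hadj
    have hle := hdeg u
    have : ndeg G u ≠ 3 := fun hc => h3 v u hv hc hadj
    omega
  -- IC predicate: vertex belongs to a degree-3 cluster
  set ICp : V → Prop := fun u => ∃ v, ndeg G v = 3 ∧ (u = v ∨ (G.Adj v u ∧ u ≠ mp v))
    with hICdef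
  have hICc : ∀ ⦃v⦄, ndeg G v = 3 → ICp v := fun v hv => ⟨v, hv, Or.inl rfl⟩
  have hICk : ∀ ⦃v u⦄, ndeg G v = 3 → G.Adj v u → u ≠ mp v → ICp u :=
    fun v u hv hadj hne => ⟨v, hv, Or.inr ⟨hadj, hne⟩⟩
  -- uniqueness of the cluster containing a vertex
  have hLuniq : ∀ ⦃v v' u : V⦄, ndeg G v = 3 → ndeg G v' = 3 →
      (u = v ∨ (G.Adj v u ∧ u ≠ mp v)) → (u = v' ∨ (G.Adj v' u ∧ u ≠ mp v')) → v = v' := by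
    intro v v' u hv hv' hu hu'
    rcases hu with rfl | ⟨hadj, hne⟩
    · rcases hu' with rfl | ⟨hadj', hne'⟩
      · rfl
      · exact absurd hadj' (h3 v' u hv' hv)
    · rcases hu' with rfl | ⟨hadj', hne'⟩
      · exact absurd hadj (h3 v u hv hv')
      · by_contra hvv'
        have hnd : ndeg G u = 2 := by
          have hge := two_le_ndeg hvv' hadj.symm hadj'.symm
          have := hdeg2 hv hadj
          omega
        have hcovu : M.Adj u (mp u) := by
          apply hmp
          apply hMcov u
          exact Set.mem_union_left _ (Set.mem_union_right _ ⟨hnd, v, hadj.symm, hv⟩)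
        have := mem_two hnd hadj.symm hadj'.symm hvv' (mp u) (hMG hcovu)
        rcases this with h | h
        · have hMuv : M.Adj v u := (h ▸ hcovu).symm
          exact hne (hMm (hcov3 hv) hMuv).symm
        · have hMuv' : M.Adj v' u := (h ▸ hcovu).symm
          exact hne' (hMm (hcov3 hv') hMuv').symm
  -- cluster of a degree-3 vertex, as a finset
  set CF : V → Finset V := fun v =>
    (Set.toFinite {u | u = v ∨ (G.Adj v u ∧ u ≠ mp v)}).toFinset with hCFdef
  have hCFmem : ∀ v u, u ∈ CF v ↔ (u = v ∨ (G.Adj v u ∧ u ≠ mp v)) := by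
    intro v u
    simp only [hCFdef, Set.Finite.mem_toFinset, Set.mem_setOf_eq]
  have hclus : ∀ ⦃v⦄, ndeg G v = 3 → ∃ x y, x ≠ y ∧ G.Adj v x ∧ G.Adj v y ∧
      x ≠ mp v ∧ y ≠ mp v ∧ CF v = {x, v, y} ∧
      (∀ z, G.Adj v z → z = mp v ∨ z = x ∨ z = y) := by
    intro v hv
    obtain ⟨c1, c2, c3, h12, h13, h23, hc1, hc2, hc3, hall⟩ := nbrs_of_ndeg_three hv
    have hmpv : G.Adj v (mp v) := hMG (hcov3 hv)
    have hfin : ∀ x y : V, x ≠ y ∧ G.Adj v x ∧ G.Adj v y ∧ x ≠ mp v ∧ y ≠ mp v ∧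
        (∀ z, G.Adj v z → z = mp v ∨ z = x ∨ z = y) →
        x ≠ y ∧ G.Adj v x ∧ G.Adj v y ∧ x ≠ mp v ∧ y ≠ mp v ∧ CF v = {x, v, y} ∧
        (∀ z, G.Adj v z → z = mp v ∨ z = x ∨ z = y) := by
      rintro x y ⟨hxy, hx, hy, hxmp, hymp, hz⟩
      refine ⟨hxy, hx, hy, hxmp, hymp, ?_, hz⟩
      ext u
      rw [hCFmem]
      simp only [Finset.mem_insert, Finset.mem_singleton]
      constructor
      · rintro (rfl | ⟨hadj, hne⟩)
        · exact Or.inr (Or.inl rfl)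
        · rcases hz u hadj with rfl | rfl | rfl
          · exact absurd rfl hne
          · exact Or.inl rfl
          · exact Or.inr (Or.inr rfl)
      · rintro (rfl | rfl | rfl)
        · exact Or.inr ⟨hx, hxmp⟩
        · exact Or.inl rfl
        · exact Or.inr ⟨hy, hymp⟩
    rcases hall (mp v) hmpv with rfl | rfl | rfl
    · exact ⟨c2, c3, ⟨h23, hc2, hc3, Ne.symm h12, Ne.symm h13,
        (hfin c2 c3 ⟨h23, hc2, hc3, Ne.symm h12, Ne.symm h13, by
          intro z hz; rcases hall z hz with rfl | rfl | rfl <;> tauto⟩).2.2.2.2.2⟩⟩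
    · exact ⟨c1, c3, ⟨h13, hc1, hc3, h12, Ne.symm h23,
        (hfin c1 c3 ⟨h13, hc1, hc3, h12, Ne.symm h23, by
          intro z hz; rcases hall z hz with rfl | rfl | rfl <;> tauto⟩).2.2.2.2.2⟩⟩
    · exact ⟨c1, c2, ⟨h12, hc1, hc2, h13, h23,
        (hfin c1 c2 ⟨h12, hc1, hc2, h13, h23, by
          intro z hz; rcases hall z hz with rfl | rfl | rfl <;> tauto⟩).2.2.2.2.2⟩⟩
  -- the phase-2 graph
  set S : SimpleGraph V :=
    { Adj := fun u w => G.Adj u w ∧ ¬ M.Adj u w ∧ ¬ ICp u ∧ ¬ ICp w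
      symm := by
        constructor
        intro u w h
        exact ⟨h.1.symm, fun hc => h.2.1 hc.symm, h.2.2.2, h.2.2.1⟩
      loopless := ⟨fun u h => G.loopless.irrefl u h.1⟩ } with hSdef
  have hSadj : ∀ u w, S.Adj u w ↔ (G.Adj u w ∧ ¬ M.Adj u w ∧ ¬ ICp u ∧ ¬ ICp w) :=
    fun u w => Iff.rfl
  -- basic degree facts for S-vertices
  have hSnd : ∀ ⦃v p q⦄, S.Adj v p → S.Adj v q → p ≠ q → ndeg G v = 2 := by
    intro v p q hp hq hpq
    have hge := two_le_ndeg hpq hp.1 hq.1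
    have hne3 : ndeg G v ≠ 3 := fun hc => hp.2.2.1 (hICc hc)
    have := hdeg v
    omega
  have hSuncov : ∀ ⦃v p q⦄, S.Adj v p → S.Adj v q → p ≠ q → ¬ (∃ w, M.Adj v w) := by
    intro v p q hp hq hpq hcov
    have hnd := hSnd hp hq hpq
    have hmpv := hmp v hcov
    rcases mem_two hnd hp.1 hq.1 hpq (mp v) (hMG hmpv) with h | h
    · exact hp.2.1 (h ▸ hmpv)
    · exact hq.2.1 (h ▸ hmpv)
  have htriS : ∀ ⦃x y z : V⦄, S.Adj x y → S.Adj y z → S.Adj x z → False :=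
    fun x y z hx hy hz => hT hx.1 hy.1 hz.1
  have hmaxS : ∀ ⦃v p q r : V⦄, S.Adj v p → S.Adj v q → S.Adj v r →
      p = q ∨ p = r ∨ q = r := by
    intro v p q r hp hq hr
    by_contra hc
    push_neg at hc
    have h3' := three_le_ndeg hc.1 hc.2.1 hc.2.2 hp.1 hq.1 hr.1
    have := hSnd hp hq hc.1
    omega
  set freeP : V → Prop := fun u => (¬ ∃ w, M.Adj u w) ∧ d u = 1 with hfreedef
  have hfree2S : ∀ ⦃v p q : V⦄, S.Adj v p → S.Adj v q → p ≠ q → freeP v := by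
    intro v p q hp hq hpq
    refine ⟨hSuncov hp hq hpq, h1 v ?_⟩
    rw [hSnd hp hq hpq]
  obtain ⟨part', hout⟩ := chop (muE S) S freeP le_rfl htriS hmaxS hfree2S
  -- the global partition
  set part : V → Finset V := fun u =>
    if h : ICp u then CF h.choose else part' u with hpartdef
  have hpartIC : ∀ ⦃v u⦄, ndeg G v = 3 → (u = v ∨ (G.Adj v u ∧ u ≠ mp v)) →
      part u = CF v := by
    intro v u hv hu
    have hex : ICp u := ⟨v, hv, hu⟩
    simp only [hpartdef, dif_pos hex]
    rw [hLuniq hex.choose_spec.1 hv hex.choose_spec.2 hu]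
  have hpartnot : ∀ ⦃u⦄, ¬ ICp u → part u = part' u := by
    intro u hu
    simp only [hpartdef, dif_neg hu]
  -- S-edges avoid IC
  have hnotICmem : ∀ ⦃p q⦄, q ∈ part' p → q = p ∨ ¬ ICp q := by
    intro p q hq
    rcases hout.shape p with h | ⟨x, y, hxy, hadj, hp⟩ | ⟨x, m, y, hxm, hmy, hxy, hnxy, hp⟩
    · rw [h] at hq
      simp only [Finset.mem_singleton] at hq
      exact Or.inl hq
    · rw [hp] at hq
      simp only [Finset.mem_insert, Finset.mem_singleton] at hq
      rcases hq with rfl | rfl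
      · exact Or.inr hadj.2.2.1
      · exact Or.inr hadj.2.2.2
    · rw [hp] at hq
      simp only [Finset.mem_insert, Finset.mem_singleton] at hq
      rcases hq with rfl | rfl | rfl
      · exact Or.inr hxm.2.2.1
      · exact Or.inr hxm.2.2.2
      · exact Or.inr hmy.2.2.2
  have hmemP : ∀ v, v ∈ part v := by
    intro v
    by_cases h : ICp v
    · obtain ⟨c, hc, hcv⟩ := h
      rw [hpartIC hc hcv, hCFmem]
      exact hcv
    · rw [hpartnot h]
      exact hout.mem v
  have heqP : ∀ u w, u ∈ part w → part u = part w := by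
    intro u w hu
    by_cases h : ICp w
    · obtain ⟨c, hc, hcw⟩ := h
      rw [hpartIC hc hcw] at hu ⊢
      rw [hCFmem] at hu
      exact hpartIC hc hu
    · rw [hpartnot h] at hu ⊢
      rcases hnotICmem hu with rfl | hnu
      · exact hpartnot h
      · rw [hpartnot hnu]
        exact hout.part_eq u w hu
  -- neighbours of an S-middle vertex all have a-value 1
  have hafact : ∀ ⦃mm p q⦄, S.Adj mm p → S.Adj mm q → p ≠ q →
      ∀ w, G.Adj mm w → a w = 1 := by
    intro mm p q hp hq hpq w hw
    have hnd := hSnd hp hq hpq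
    have hncov := hSuncov hp hq hpq
    have hx2pp : mm ∈ X2pp G := by
      refine ⟨hnd, ?_⟩
      intro z hz hz3
      by_cases hmm : mm = mp z
      · refine hncov ⟨z, ?_⟩
        have := hcov3 hz3
        rw [← hmm] at this
        exact this.symm
      · exact hp.2.2.1 (hICk hz3 hz.symm hmm)
    have hnz : mm ∉ Zset G a := by
      intro hz
      exact hncov (hMcov mm (Set.mem_union_left _ (Set.mem_union_left _ hz)))
    have : ¬ (∃ w', G.Adj mm w' ∧ a w' = 0) := fun hc => hnz ⟨hx2pp, hc⟩
    push_neg at this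
    have := this w hw
    have := ha w
    omega
  -- matched edge from kept neighbour to its other neighbour
  have hL6 : ∀ ⦃v u q⦄, ndeg G v = 3 → G.Adj v u → u ≠ mp v → G.Adj u q → q ≠ v →
      M.Adj u q := by
    intro v u q hv hadj hne hadj' hqv
    have hnd : ndeg G u = 2 := by
      have hge := two_le_ndeg (Ne.symm hqv) hadj.symm hadj'
      have := hdeg2 hv hadj
      omega
    have hcovu : M.Adj u (mp u) :=
      hmp u (hMcov u (Set.mem_union_left _ (Set.mem_union_right _ ⟨hnd, v, hadj.symm, hv⟩)))
    rcases mem_two hnd hadj.symm hadj' (Ne.symm hqv) (mp u) (hMG hcovu) with h | h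
    · exfalso
      have hMvu : M.Adj v u := (h ▸ hcovu).symm
      exact hne (hMm (hcov3 hv) hMvu).symm
    · exact h ▸ hcovu
  -- edge from a non-cluster vertex into a cluster is a matching edge
  have hE6 : ∀ ⦃u z⦄, ¬ ICp u → G.Adj u z → ICp z → M.Adj u z := by
    intro u z hu hadj hz
    obtain ⟨v, hv, hzv⟩ := hz
    rcases hzv with rfl | ⟨hadjvz, hzne⟩
    · -- z is a centre
      by_cases hmpu : u = mp z
      · exact (hmpu ▸ (hcov3 hv).symm : M.Adj u z)
      · exact absurd (hICk hv hadj.symm hmpu) hu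
    · -- z is a kept neighbour of centre v
      have huv : u ≠ v := by
        rintro rfl
        exact hu (hICc hv)
      exact (hL6 hv hadjvz hzne hadj.symm huv).symm
  -- classification of crossing edges at non-cluster vertices
  have hclass : ∀ ⦃u z⦄, ¬ ICp u → G.Adj u z → z ∉ part u →
      M.Adj u z ∨ (S.Adj u z ∧ z ∉ part' u) := by
    intro u z hu hadj hnz
    by_cases hM : M.Adj u z
    · exact Or.inl hM
    by_cases hzIC : ICp z
    · exact Or.inl (hE6 hu hadj hzIC)
    · refine Or.inr ⟨⟨hadj, hM, hu, hzIC⟩, ?_⟩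
      rw [hpartnot hu] at hnz
      exact hnz
  -- now verify the plan conditions and conclude
  apply plan_to_sol G a d part hmemP heqP
  · -- shapes
    intro v
    by_cases h : ICp v
    · obtain ⟨c, hc, hcv⟩ := h
      obtain ⟨x, y, hxy, hx, hy, hxmp, hymp, hCFeq, hzall⟩ := hclus hc
      refine Or.inr (Or.inr ⟨x, c, y, hx.symm, hy, hxy, ?_, ?_, ?_, ?_⟩)
      · intro hadj
        exact hT hx hadj hy
      · have := h2 c x hc hx
        have := ha x
        omega
      · have := h2 c y hc hy
        have := ha y
        omega
      · rw [hpartIC hc hcv, hCFeq]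
    · rw [hpartnot h]
      rcases hout.shape v with h' | ⟨p, q, hpq, hadj, hp⟩ |
        ⟨x, m, y, hxm, hmy, hxy, hnxy, hp⟩
      · exact Or.inl h'
      · exact Or.inr (Or.inl ⟨p, q, hpq, hadj.1, hp⟩)
      · refine Or.inr (Or.inr ⟨x, m, y, hxm.1, hmy.1, hxy, ?_, ?_, ?_, hp⟩)
        · intro hadj
          exact hT hxm.1 hmy.1 hadj
        · exact hafact hxm.symm hmy hxy x hxm.1.symm
        · exact hafact hxm.symm hmy hxy y hmy.1
  · -- crossing edges have d-value 1
    intro u v hadj hnv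
    by_cases h : ICp u
    · obtain ⟨c, hc, hcu⟩ := h
      rcases hcu with rfl | ⟨hadjcu, hneu⟩
      · exact h1 u (by omega)
      · have hvc : v ≠ c := by
          rintro rfl
          refine hnv ?_
          rw [hpartIC hc (Or.inr ⟨hadjcu, hneu⟩), hCFmem]
          exact Or.inl rfl
        exact h1 u (two_le_ndeg (Ne.symm hvc) hadjcu.symm hadj)
    · rcases hclass h hadj hnv with hM | ⟨hS, _⟩
      · exact hMd hM
      · exact (hout.crossfree u v hS (by rw [← hpartnot h]; exact hnv)).1.2
  · -- at most one crossing edge per vertex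
    intro u v w hadjv hadjw hnv hnw
    by_cases h : ICp u
    · obtain ⟨c, hc, hcu⟩ := h
      rcases hcu with rfl | ⟨hadjcu, hneu⟩
      · -- u is a centre
        obtain ⟨x, y, hxy, hx, hy, hxmp, hymp, hCFeq, hzall⟩ := hclus hc
        have hpu : part u = CF u := hpartIC hc (Or.inl rfl)
        have hxmem : x ∈ part u := by
          rw [hpu, hCFmem]
          exact Or.inr ⟨hx, hxmp⟩
        have hymem : y ∈ part u := by
          rw [hpu, hCFmem]
          exact Or.inr ⟨hy, hymp⟩
        have hv' : v = mp u := by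
          rcases hzall v hadjv with h' | rfl | rfl
          · exact h'
          · exact absurd hxmem hnv
          · exact absurd hymem hnv
        have hw' : w = mp u := by
          rcases hzall w hadjw with h' | rfl | rfl
          · exact h'
          · exact absurd hxmem hnw
          · exact absurd hymem hnw
        rw [hv', hw']
      · -- u is a kept neighbour
        have hcmem : c ∈ part u := by
          rw [hpartIC hc (Or.inr ⟨hadjcu, hneu⟩), hCFmem]
          exact Or.inl rfl
        have hvc : v ≠ c := fun hc' => hnv (hc' ▸ hcmem)
        have hwc : w ≠ c := fun hc' => hnw (hc' ▸ hcmem)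
        by_contra hvw
        have h3le := three_le_ndeg (Ne.symm hvc) (Ne.symm hwc) hvw
          hadjcu.symm hadjv hadjw
        have := hdeg2 hc hadjcu
        omega
    · rcases hclass h hadjv hnv with hMv | ⟨hSv, hnv'⟩ <;>
        rcases hclass h hadjw hnw with hMw | ⟨hSw, hnw'⟩
      · exact hMm hMv hMw
      · exact absurd ⟨v, hMv⟩ (hout.crossfree u w hSw hnw').1.1
      · exact absurd ⟨w, hMw⟩ (hout.crossfree u v hSv hnv').1.1
      · exact hout.crossuniq u v w hSv hSw hnv' hnw'
end Bwd

/-- for special {C₃,C₄}-free graphs of max degree ≤ 3,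
being a YES-instance is equivalent to the existence of a matching covering `Y`
and avoiding all vertices of `d`-value 0. -/
theorem stmt_11 {V : Type*} [Fintype V] [DecidableEq V] (G : SimpleGraph V)
    (a d : V → ℕ) (ha : ∀ v, a v ≤ 1) (hd : ∀ v, d v ≤ 1)
    (hT : TriangleFree G) (hC4 : C4Free G) (hdeg : MaxDegLE G 3)
    (h1 : ∀ v, 2 ≤ ndeg G v → d v = 1)
    (h2 : ∀ v w, ndeg G v = 3 → G.Adj v w → a w ≠ 0)
    (h3 : ∀ v w, ndeg G v = 3 → ndeg G w = 3 → ¬ G.Adj v w) :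
    HasSolution G a d ↔
      ∃ M : SimpleGraph V, M ≤ G ∧ IsMatchingGraph M ∧
        (∀ y ∈ Yset G a, ∃ w, M.Adj y w) ∧
        (∀ w, d w = 0 → ∀ z, ¬ M.Adj w z) := by
  constructor
  · exact fun h => forward_dir G a d hT hC4 h
  · rintro ⟨M, hMG, hMm, hMcov, hMav⟩
    exact backward_dir G a d ha hd hT hdeg h1 h2 h3 M hMG hMm hMcov hMav
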